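/- Let Π ∈ ℂ^{m×n} have full column rank, with SVD Π = U₁ Σ V^H + U₂·0 (so U₁ ∈ ℂ^{m×n}, U₂ ∈ ℂ^{m×(m−n)}, [U₁ U₂] unitary, Σ positive diagonal, V unitary). Write Π_r, Π_j for real/imaginary parts of Π and U_{2r}, U_{2j} for those of U₂. Then I_m − [Π_r −Π_j]·([[Π_r, −Π_j],[Π_j, Π_r]]ᵀ·[[Π_r, −Π_j],[Π_j, Π_r]])⁻¹·[Π_r −Π_j]ᵀ = [U_{2r} U_{2j}]·[U_{2r} U_{2j}]ᵀ. -/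

import Mathlib

open Matrix

namespace Stmt10Aux

variable {a b c : Type*}

/-- entrywise real part -/
def reM (X : Matrix a b ℂ) : Matrix a b ℝ := fun i j => (X i j).re

/-- entrywise imaginary part -/
def imM (X : Matrix a b ℂ) : Matrix a b ℝ := fun i j => (X i j).im

/-- real representation of a complex matrix -/
def rho (X : Matrix a b ℂ) : Matrix (a ⊕ a) (b ⊕ b) ℝ :=
  Matrix.fromBlocks (reM X) (-(imM X)) (imM X) (reM X)

lemma rho_mul [Fintype b] (X : Matrix a b ℂ) (Y : Matrix b c ℂ) :
    rho (X * Y) = rho X * rho Y := by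
  ext i j
  cases i <;> cases j <;>
    simp [rho, reM, imM, Matrix.mul_apply, Fintype.sum_sum_type, Complex.mul_re,
      Complex.mul_im, Finset.sum_add_distrib, Finset.sum_sub_distrib] <;> ring

lemma rho_one [DecidableEq a] : rho (1 : Matrix a a ℂ) = 1 := by
  have h1 : reM (1 : Matrix a a ℂ) = 1 := by
    ext i j; simp [reM, Matrix.one_apply, apply_ite Complex.re]
  have h2 : imM (1 : Matrix a a ℂ) = 0 := by
    ext i j; simp [imM, Matrix.one_apply, apply_ite Complex.im]
  rw [rho, h1, h2, neg_zero, Matrix.fromBlocks_one]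

lemma rho_conjTranspose (X : Matrix a b ℂ) : (rho X)ᵀ = rho Xᴴ := by
  ext i j
  cases i <;> cases j <;>
    simp [rho, reM, imM, Matrix.conjTranspose_apply]

lemma rho_submatrix (X : Matrix a b ℂ) :
    (rho X).submatrix Sum.inl Sum.inl = reM X := by
  ext i j
  simp [rho]

end Stmt10Aux

open Stmt10Aux

/-- For a full-column-rank complex matrix `P` with SVD `P = U₁ Σ Vᴴ`
(`[U₁ U₂]` unitary, `Σ` positive diagonal, `V` unitary), the real projector
identity `I − [Pr −Pj] (MᵀM)⁻¹ [Pr −Pj]ᵀ = [U₂r U₂j][U₂r U₂j]ᵀ` holds, where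
`M = [[Pr, −Pj],[Pj, Pr]]`. -/
theorem stmt_10 {m n k : ℕ} (P : Matrix (Fin m) (Fin n) ℂ)
    (hFCR : Function.Injective P.mulVec)
    (U1 : Matrix (Fin m) (Fin n) ℂ) (U2 : Matrix (Fin m) (Fin k) ℂ)
    (hU : Matrix.fromCols U1 U2 * (Matrix.fromCols U1 U2)ᴴ = 1)
    (hU' : (Matrix.fromCols U1 U2)ᴴ * Matrix.fromCols U1 U2 = 1)
    (d : Fin n → ℝ) (hd : ∀ i, 0 < d i)
    (V : Matrix (Fin n) (Fin n) ℂ) (hV : Vᴴ * V = 1) (hV' : V * Vᴴ = 1)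
    (hSVD : P = U1 * Matrix.diagonal (fun i => (d i : ℂ)) * Vᴴ)
    (Pr Pj : Matrix (Fin m) (Fin n) ℝ)
    (hP : ∀ i j, P i j = ⟨Pr i j, Pj i j⟩)
    (U2r U2j : Matrix (Fin m) (Fin k) ℝ)
    (hU2 : ∀ i j, U2 i j = ⟨U2r i j, U2j i j⟩) :
    (1 : Matrix (Fin m) (Fin m) ℝ) -
        Matrix.fromCols Pr (-Pj) *
          ((Matrix.fromBlocks Pr (-Pj) Pj Pr)ᵀ *
              Matrix.fromBlocks Pr (-Pj) Pj Pr)⁻¹ *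
          (Matrix.fromCols Pr (-Pj))ᵀ =
      Matrix.fromCols U2r U2j * (Matrix.fromCols U2r U2j)ᵀ := by
  classical
  -- identify the real blocks with rho P
  have hre : reM P = Pr := by ext i j; simp [reM, hP]
  have him : imM P = Pj := by ext i j; simp [imM, hP]
  have hPρ : Matrix.fromBlocks Pr (-Pj) Pj Pr = rho P := by
    rw [rho, hre, him]
  have hdc : ∀ i, (d i : ℂ) ≠ 0 := fun i => by
    exact_mod_cast (hd i).ne'
  set D : Matrix (Fin n) (Fin n) ℂ := Matrix.diagonal (fun i => (d i : ℂ)) with hD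
  have hDH : Dᴴ = D := by
    rw [hD, Matrix.diagonal_conjTranspose]
    congr 1
    funext i
    simp [Pi.star_def]
  have hPH : Pᴴ = V * (D * U1ᴴ) := by
    rw [hSVD]
    rw [Matrix.conjTranspose_mul, Matrix.conjTranspose_mul, hDH,
      Matrix.conjTranspose_conjTranspose]
  -- U1ᴴ U1 = 1
  have hblocks := hU'
  rw [Matrix.conjTranspose_fromCols_eq_fromRows_conjTranspose,
    Matrix.fromRows_mul_fromCols, ← Matrix.fromBlocks_one] at hblocks
  have hU1 : U1ᴴ * U1 = 1 := (Matrix.fromBlocks_inj.mp hblocks).1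
  -- Pᴴ P and its inverse
  have hA : Pᴴ * P = V * Matrix.diagonal (fun i => (d i : ℂ) * (d i : ℂ)) * Vᴴ := by
    rw [hPH, hSVD]
    rw [show U1 * D * Vᴴ = U1 * (D * Vᴴ) from Matrix.mul_assoc _ _ _]
    rw [Matrix.mul_assoc V (D * U1ᴴ) _, Matrix.mul_assoc D U1ᴴ _,
      show U1ᴴ * (U1 * (D * Vᴴ)) = (U1ᴴ * U1) * (D * Vᴴ) from (Matrix.mul_assoc _ _ _).symm,
      hU1, Matrix.one_mul, show D * (D * Vᴴ) = D * D * Vᴴ from (Matrix.mul_assoc _ _ _).symm,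
      hD, Matrix.diagonal_mul_diagonal, ← Matrix.mul_assoc]
  set Q : Matrix (Fin n) (Fin n) ℂ :=
    V * Matrix.diagonal (fun i => ((d i : ℂ) * (d i : ℂ))⁻¹) * Vᴴ with hQdef
  have hAQ : (Pᴴ * P) * Q = 1 := by
    rw [hA, hQdef]
    rw [Matrix.mul_assoc (V * Matrix.diagonal fun i => (d i : ℂ) * (d i : ℂ)) Vᴴ _,
      show Vᴴ * (V * Matrix.diagonal (fun i => ((d i : ℂ) * (d i : ℂ))⁻¹) * Vᴴ)
        = (Vᴴ * V) * (Matrix.diagonal (fun i => ((d i : ℂ) * (d i : ℂ))⁻¹) * Vᴴ) by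
          rw [Matrix.mul_assoc, Matrix.mul_assoc],
      hV, Matrix.one_mul, ← Matrix.mul_assoc, Matrix.mul_assoc V,
      Matrix.diagonal_mul_diagonal]
    have : (fun i => (d i : ℂ) * (d i : ℂ) * ((d i : ℂ) * (d i : ℂ))⁻¹) = fun _ => (1 : ℂ) := by
      funext i
      exact mul_inv_cancel₀ (mul_ne_zero (hdc i) (hdc i))
    rw [this, Matrix.diagonal_one, Matrix.mul_one, hV']
  have hinv : (Pᴴ * P)⁻¹ = Q := Matrix.inv_eq_right_inv hAQ
  -- the projector over ℂ
  have hDED : D * (Matrix.diagonal (fun i => ((d i : ℂ) * (d i : ℂ))⁻¹) * D) = 1 := by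
    rw [hD, Matrix.diagonal_mul_diagonal, Matrix.diagonal_mul_diagonal]
    have : (fun i => (d i : ℂ) * (((d i : ℂ) * (d i : ℂ))⁻¹ * (d i : ℂ))) = fun _ => (1 : ℂ) := by
      funext i
      field_simp
      exact div_self (hdc i)
    rw [this, Matrix.diagonal_one]
  have hProj : P * Q * Pᴴ = U1 * U1ᴴ := by
    rw [hPH, hSVD, hQdef]
    simp only [Matrix.mul_assoc]
    rw [← Matrix.mul_assoc Vᴴ V, hV, Matrix.one_mul, ← Matrix.mul_assoc Vᴴ V, hV,
      Matrix.one_mul]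
    rw [show Matrix.diagonal (fun i => ((d i : ℂ) * (d i : ℂ))⁻¹) * (D * U1ᴴ)
        = (Matrix.diagonal (fun i => ((d i : ℂ) * (d i : ℂ))⁻¹) * D) * U1ᴴ from
        (Matrix.mul_assoc _ _ _).symm]
    rw [show D * (Matrix.diagonal (fun i => ((d i : ℂ) * (d i : ℂ))⁻¹) * D * U1ᴴ)
        = (D * (Matrix.diagonal (fun i => ((d i : ℂ) * (d i : ℂ))⁻¹) * D)) * U1ᴴ from
        (Matrix.mul_assoc _ _ _).symm]
    rw [hDED, Matrix.one_mul]
  -- real-representation of inverse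
  have hrhoinv : (rho (Pᴴ * P))⁻¹ = rho Q := by
    apply Matrix.inv_eq_right_inv
    rw [← rho_mul, hAQ, rho_one]
  -- rewrite the LHS blocks
  have hMtM : (Matrix.fromBlocks Pr (-Pj) Pj Pr)ᵀ * Matrix.fromBlocks Pr (-Pj) Pj Pr
      = rho (Pᴴ * P) := by
    rw [hPρ, rho_conjTranspose, rho_mul]
  have hN : Matrix.fromCols Pr (-Pj) = (rho P).submatrix Sum.inl id := by
    ext i j
    cases j <;> simp [rho, reM, imM, hre, him, Matrix.fromCols]
  -- the key computation: N (MᵀM)⁻¹ Nᵀ = reM (P Q Pᴴ)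
  have hsub : Matrix.fromCols Pr (-Pj) * rho Q * (Matrix.fromCols Pr (-Pj))ᵀ
      = (rho (P * Q * Pᴴ)).submatrix Sum.inl Sum.inl := by
    rw [hN]
    have h1 : (rho P).submatrix Sum.inl id * rho Q
        = (rho P * rho Q).submatrix Sum.inl id := by
      rw [Matrix.submatrix_mul (rho P) (rho Q) Sum.inl id id Function.bijective_id]
      simp
    have h2 : ((rho P).submatrix Sum.inl id)ᵀ = ((rho P)ᵀ).submatrix id Sum.inl := by
      ext i j; simp
    rw [h1, h2]
    rw [show (rho P * rho Q).submatrix Sum.inl id * ((rho P)ᵀ).submatrix id Sum.inl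
        = (rho P * rho Q * (rho P)ᵀ).submatrix Sum.inl Sum.inl by
          rw [Matrix.submatrix_mul (rho P * rho Q) ((rho P)ᵀ) Sum.inl id Sum.inl Function.bijective_id]]
    simp only [rho_conjTranspose, ← rho_mul]
  rw [hMtM, hrhoinv, hsub, hProj]
  -- finish: 1 - re(U1 U1ᴴ) = U2r U2rᵀ + U2j U2jᵀ
  have hUU : U1 * U1ᴴ + U2 * U2ᴴ = 1 := by
    have := hU
    rwa [Matrix.conjTranspose_fromCols_eq_fromRows_conjTranspose,
      Matrix.fromCols_mul_fromRows] at this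
  have hU1U1 : U1 * U1ᴴ = 1 - U2 * U2ᴴ := by
    rw [← hUU, add_sub_cancel_right]
  rw [hU1U1, rho_submatrix]
  have hre2 : reM (1 - U2 * U2ᴴ) = 1 - reM (U2 * U2ᴴ) := by
    ext i j
    simp [reM, Matrix.sub_apply, Matrix.one_apply, apply_ite Complex.re]
  rw [hre2, sub_sub_cancel]
  ext i j
  rw [Matrix.transpose_fromCols, Matrix.fromCols_mul_fromRows]
  simp [reM, Matrix.mul_apply, Complex.mul_re, hU2, Matrix.conjTranspose_apply,
    Matrix.add_apply, Finset.sum_add_distrib]
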